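/- Let g be an N×N matrix of complex numbers with |g_{ij}| ≤ 2 and conj(g_{ij}) = g_{ji}, and set G := (1/N²) ∑_{i,j} |g_{ij}|². Then (1/N³) ∑_{i,j,k} (|g_{ik}| + |g_{jk}|) |g_{ij}|² ≤ 2 √N · G^{3/2}. -/

import Mathlib

theorem cubic_term_estimate {N : ℕ} (hN : 0 < N) (g : Fin N → Fin N → ℂ)
    (hb : ∀ i j, ‖g i j‖ ≤ 2)
    (hconj : ∀ i j, (starRingEnd ℂ) (g i j) = g j i)
    (G : ℝ) (hG : G = ((N:ℝ)^2)⁻¹ * ∑ i, ∑ j, ‖g i j‖^2) :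
    ((N:ℝ)^3)⁻¹ * ∑ i, ∑ j, ∑ k,
        (‖g i k‖ + ‖g j k‖) * ‖g i j‖^2
      ≤ 2 * Real.sqrt N * G ^ ((3:ℝ)/2) := by
  set a : Fin N → Fin N → ℝ := fun i j => ‖g i j‖ with ha
  have ha0 : ∀ i j, 0 ≤ a i j := fun i j => norm_nonneg _
  have hsymm : ∀ i j, a i j = a j i := by
    intro i j
    simp only [ha, ← hconj i j, Complex.norm_conj]
  set s : Fin N → ℝ := fun i => ∑ j, a i j ^ 2 with hs
  have hs0 : ∀ i, 0 ≤ s i := fun i => Finset.sum_nonneg fun j _ => sq_nonneg _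
  set S : ℝ := ∑ i, s i with hSdef
  have hS0 : 0 ≤ S := Finset.sum_nonneg fun i _ => hs0 i
  set c : Fin N → ℝ := fun i => ∑ k, a i k with hc
  have hc0 : ∀ i, 0 ≤ c i := fun i => Finset.sum_nonneg fun k _ => ha0 i k
  have hNpos : (0:ℝ) < N := by exact_mod_cast hN
  -- step 1 : the triple sum equals 2 * ∑ i, c i * s i
  have hkey : ∀ i j : Fin N, (∑ k, (a i k + a j k) * a i j ^ 2)
      = c i * a i j ^ 2 + c j * a i j ^ 2 := by
    intro i j
    rw [← Finset.sum_mul, Finset.sum_add_distrib, add_mul]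
  have hsplit : (∑ i, ∑ j, ∑ k, (a i k + a j k) * a i j ^ 2)
      = 2 * ∑ i, c i * s i := by
    simp only [hkey, Finset.sum_add_distrib]
    have h2 : (∑ i, ∑ j, c i * a i j ^ 2) = ∑ i, c i * s i := by
      refine Finset.sum_congr rfl fun i _ => ?_
      rw [hs, Finset.mul_sum]
    have h3 : (∑ i, ∑ j, c j * a i j ^ 2) = ∑ i, c i * s i := by
      rw [Finset.sum_comm]
      refine Finset.sum_congr rfl fun j _ => ?_
      rw [hs, Finset.mul_sum]
      refine Finset.sum_congr rfl fun i _ => ?_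
      rw [hsymm i j]
    rw [h2, h3]; ring
  -- step 2 : Cauchy–Schwarz : c i ≤ √N * √(s i)
  have hcs : ∀ i, c i ≤ Real.sqrt N * Real.sqrt (s i) := by
    intro i
    have h := sq_sum_le_card_mul_sum_sq (s := (Finset.univ : Finset (Fin N)))
      (f := fun k => a i k)
    simp only [Finset.card_univ, Fintype.card_fin] at h
    calc c i = Real.sqrt ((c i) ^ 2) := (Real.sqrt_sq (hc0 i)).symm
      _ ≤ Real.sqrt ((N : ℝ) * s i) := by
          apply Real.sqrt_le_sqrt
          exact_mod_cast h
      _ = Real.sqrt N * Real.sqrt (s i) := Real.sqrt_mul (Nat.cast_nonneg N) _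
  -- step 3 : bound the weighted sum
  have hbound : (∑ i, c i * s i) ≤ Real.sqrt N * Real.sqrt S * S := by
    calc (∑ i, c i * s i) ≤ ∑ i, (Real.sqrt N * Real.sqrt S) * s i := by
          refine Finset.sum_le_sum fun i _ => ?_
          refine mul_le_mul_of_nonneg_right ?_ (hs0 i)
          refine (hcs i).trans ?_
          refine mul_le_mul_of_nonneg_left ?_ (Real.sqrt_nonneg _)
          exact Real.sqrt_le_sqrt (Finset.single_le_sum (fun j _ => hs0 j) (Finset.mem_univ i))
      _ = Real.sqrt N * Real.sqrt S * S := by rw [← Finset.mul_sum]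
  -- rewrite the right-hand side
  have hS32 : S ^ ((3:ℝ)/2) = Real.sqrt S * S := by
    rw [show (3:ℝ)/2 = 1/2 + 1 by norm_num, Real.rpow_add' hS0 (by norm_num),
      Real.rpow_one, Real.sqrt_eq_rpow]
  have hN3 : ((N:ℝ)^2) ^ ((3:ℝ)/2) = (N:ℝ)^3 := by
    rw [← Real.rpow_natCast (N:ℝ) 2, ← Real.rpow_mul hNpos.le,
      show ((2:ℕ):ℝ) * ((3:ℝ)/2) = ((3:ℕ):ℝ) by norm_num, Real.rpow_natCast]
  have hrhs : 2 * Real.sqrt N * G ^ ((3:ℝ)/2)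
      = ((N:ℝ)^3)⁻¹ * (2 * (Real.sqrt N * Real.sqrt S * S)) := by
    rw [hG, mul_comm (((N:ℝ)^2)⁻¹) S,
      Real.mul_rpow hS0 (inv_nonneg.mpr (by positivity)),
      Real.inv_rpow (by positivity), hN3, hS32]
    ring
  rw [hrhs, hsplit]
  have hinv : (0:ℝ) ≤ ((N:ℝ)^3)⁻¹ := by positivity
  exact mul_le_mul_of_nonneg_left (by linarith) hinv
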